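/- Singular value bound for the orthogonal-restriction cocycle: let A be an invertible (d+1)×(d+1) real matrix, x ∈ Δ, and suppose ι(y) := ι(x)·A^{−1}·(normalization) has all coordinates in [0,1] after the leading 1 (i.e., y ∈ Δ). Let D = Π·A·H(x). Then δ_2(A) ≤ C · δ_1(D), where δ_i denotes the i-th largest singular value and C > 0 is a constant depending only on d (not on A or x). -/

import Mathlib

open Matrix

/-- `ι x = (1, x_1, …, x_d)` as a row vector. -/
def iota {d : ℕ} (x : Fin d → ℝ) : Fin (d + 1) → ℝ := Fin.cases 1 x

/-- `H(x)`: the `(d+1) × d` matrix with first row `-x` and remaining rows the identity. -/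
def Hmat {d : ℕ} (x : Fin d → ℝ) : Matrix (Fin (d + 1)) (Fin d) ℝ :=
  Matrix.of (Fin.cases (fun j => -x j) (fun i j => if i = j then 1 else 0))

/-- `Π`: the `d × (d+1)` matrix deleting the first coordinate. -/
def Pmat (d : ℕ) : Matrix (Fin d) (Fin (d + 1)) ℝ :=
  Matrix.of fun i j => if j = i.succ then 1 else 0

/-- Membership in `Δ = {x : 1 ≥ x_1 ≥ … ≥ x_d ≥ 0}`. -/
def memDelta {d : ℕ} (x : Fin d → ℝ) : Prop :=
  (∀ i, 0 ≤ x i) ∧ (∀ i, x i ≤ 1) ∧ ∀ i j : Fin d, i ≤ j → x j ≤ x i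

/-- Euclidean (ℓ²) operator norm of a real matrix; this is its largest singular value. -/
noncomputable def opN {m n : Type*} [Fintype m] [Fintype n] [DecidableEq m] [DecidableEq n]
    (A : Matrix m n ℝ) : ℝ :=
  ‖LinearMap.toContinuousLinearMap (Matrix.toEuclideanLin A)‖

/-- The second largest singular value of a square real matrix, characterized as the
distance (in the ℓ² operator norm) to the set of matrices of rank at most `1`. -/
noncomputable def delta2 {m : Type*} [Fintype m] [DecidableEq m]
    (A : Matrix m m ℝ) : ℝ :=
  sInf {r : ℝ | ∃ B : Matrix m m ℝ, B.rank ≤ 1 ∧ r = opN (A - B)}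

/-! ### Auxiliary lemmas -/

lemma dot_self_nonneg {n : Type*} [Fintype n] (v : n → ℝ) : 0 ≤ v ⬝ᵥ v :=
  Finset.sum_nonneg fun i _ => mul_self_nonneg (v i)

lemma norm_equiv_symm {n : ℕ} (w : Fin n → ℝ) :
    ‖(WithLp.equiv 2 (Fin n → ℝ)).symm w‖ = Real.sqrt (w ⬝ᵥ w) := by
  rw [EuclideanSpace.norm_eq]
  congr 1
  simp [dotProduct, Real.norm_eq_abs, sq_abs, pow_two]

lemma Matrix.toEuclideanLin_apply_piLp_equiv_symm {m n : Type*} [Fintype n] [DecidableEq n]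
    (M : Matrix m n ℝ) (v : n → ℝ) :
    Matrix.toEuclideanLin M ((WithLp.equiv 2 (n → ℝ)).symm v) =
      (WithLp.equiv 2 (m → ℝ)).symm (M *ᵥ v) := rfl

lemma opN_nonneg {m n : Type*} [Fintype m] [Fintype n] [DecidableEq m] [DecidableEq n]
    (A : Matrix m n ℝ) : 0 ≤ opN A := norm_nonneg _

/-- Pointwise criterion for bounding `opN`. -/
lemma opN_le_of_forall {m n : ℕ} (M : Matrix (Fin m) (Fin n) ℝ) (K : ℝ) (hK : 0 ≤ K)
    (h : ∀ t : Fin n → ℝ,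
      Real.sqrt ((M *ᵥ t) ⬝ᵥ (M *ᵥ t)) ≤ K * Real.sqrt (t ⬝ᵥ t)) :
    opN M ≤ K := by
  refine ContinuousLinearMap.opNorm_le_bound _ hK fun v => ?_
  have hv : v = (WithLp.equiv 2 (Fin n → ℝ)).symm ((WithLp.equiv 2 (Fin n → ℝ)) v) := rfl
  rw [LinearMap.coe_toContinuousLinearMap']
  rw [hv, Matrix.toEuclideanLin_apply_piLp_equiv_symm, norm_equiv_symm, norm_equiv_symm]
  exact h _

/-- `opN` bounds the Euclidean norm of `M *ᵥ t`. -/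
lemma dot_mulVec_le_opN {m n : ℕ} (M : Matrix (Fin m) (Fin n) ℝ) (t : Fin n → ℝ) :
    Real.sqrt ((M *ᵥ t) ⬝ᵥ (M *ᵥ t)) ≤ opN M * Real.sqrt (t ⬝ᵥ t) := by
  have := (LinearMap.toContinuousLinearMap (Matrix.toEuclideanLin M)).le_opNorm
    ((WithLp.equiv 2 (Fin n → ℝ)).symm t)
  rwa [LinearMap.coe_toContinuousLinearMap',
    Matrix.toEuclideanLin_apply_piLp_equiv_symm, norm_equiv_symm, norm_equiv_symm] at this

lemma vecMul_smul_mat {n m : ℕ} (v : Fin n → ℝ) (c : ℝ) (M : Matrix (Fin n) (Fin m) ℝ) :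
    v ᵥ* (c • M) = c • (v ᵥ* M) := by
  funext j
  simp only [vecMul, dotProduct, Matrix.smul_apply, Pi.smul_apply, smul_eq_mul,
    Finset.mul_sum]
  exact Finset.sum_congr rfl fun k _ => by ring

lemma iota_vecMul_Hmat {d : ℕ} (x : Fin d → ℝ) : iota x ᵥ* Hmat x = 0 := by
  funext j
  simp only [vecMul, dotProduct, Fin.sum_univ_succ, iota, Hmat, Matrix.of_apply,
    Fin.cases_zero, Fin.cases_succ, Pi.zero_apply, ite_mul, one_mul, zero_mul, mul_ite,
    mul_one, mul_zero]
  simp [Finset.sum_ite_eq]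

lemma Pmat_mulVec {d : ℕ} (z : Fin (d + 1) → ℝ) :
    Pmat d *ᵥ z = fun i => z i.succ := by
  funext i
  simp [Pmat, mulVec, dotProduct, ite_mul]

lemma Hmat_Pmat_mulVec {d : ℕ} (x : Fin d → ℝ) (z : Fin (d + 1) → ℝ)
    (hz : iota x ⬝ᵥ z = 0) : Hmat x *ᵥ (Pmat d *ᵥ z) = z := by
  have hz' : z 0 = -∑ j, x j * z j.succ := by
    rw [dotProduct, Fin.sum_univ_succ] at hz
    simp only [iota, Fin.cases_zero, Fin.cases_succ, one_mul] at hz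
    linarith
  rw [Pmat_mulVec]
  funext i
  refine Fin.cases ?_ (fun k => ?_) i
  · simp only [mulVec, dotProduct, Hmat, Matrix.of_apply, Fin.cases_zero]
    rw [hz']
    simp [Finset.sum_neg_distrib]
  · simp [mulVec, dotProduct, Hmat, ite_mul]

theorem stmt9 {d : ℕ} :
    ∃ C : ℝ, 0 < C ∧ ∀ A : Matrix (Fin (d + 1)) (Fin (d + 1)) ℝ, IsUnit A.det →
      ∀ x y : Fin d → ℝ, memDelta x → memDelta y →
      (∃ c : ℝ, 0 < c ∧ iota y = c • (iota x ᵥ* A⁻¹)) →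
      delta2 A ≤ C * opN (Pmat d * A * Hmat x) := by
  refine ⟨Real.sqrt (d + 1), Real.sqrt_pos.mpr (by positivity), ?_⟩
  intro A hA x y hx hy ⟨c, hc, hcy⟩
  set u : Fin (d + 1) → ℝ := iota x with hu
  set s : ℝ := u ⬝ᵥ u with hs
  have hs1 : (1 : ℝ) ≤ s := by
    rw [hs, hu, dotProduct, Fin.sum_univ_succ]
    simp only [iota, Fin.cases_zero, Fin.cases_succ, mul_one]
    have : (0:ℝ) ≤ ∑ i : Fin d, x i * x i :=
      Finset.sum_nonneg fun i _ => mul_self_nonneg _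
    linarith
  have hs0 : s ≠ 0 := by linarith
  set Q : Matrix (Fin (d + 1)) (Fin (d + 1)) ℝ := 1 - s⁻¹ • vecMulVec u u with hQ
  set B : Matrix (Fin (d + 1)) (Fin (d + 1)) ℝ := A * (s⁻¹ • vecMulVec u u) with hB
  -- A - B = A * Q
  have hAB : A - B = A * Q := by
    rw [hQ, hB, Matrix.mul_sub, Matrix.mul_one]
  -- rank B ≤ 1
  have hBrank : B.rank ≤ 1 := by
    have hBeq : B = vecMulVec (A *ᵥ (s⁻¹ • u)) u := by
      ext i j
      simp only [hB, Matrix.mul_apply, Matrix.smul_apply, vecMulVec_apply, mulVec, dotProduct,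
        Pi.smul_apply, smul_eq_mul, Finset.sum_mul]
      exact Finset.sum_congr rfl fun k _ => by ring
    rw [hBeq, vecMulVec_eq (Fin 1)]
    exact (Matrix.rank_mul_le_right _ _).trans
      ((Matrix.rank_le_card_height _).trans (by simp))
  -- u ᵥ* Q = 0
  have huQ : u ᵥ* Q = 0 := by
    have h1 : u ᵥ* vecMulVec u u = s • u := by
      funext j
      simp only [vecMul, dotProduct, vecMulVec_apply, Pi.smul_apply, smul_eq_mul, hs,
        dotProduct, Finset.sum_mul]
      exact Finset.sum_congr rfl fun k _ => by ring
    rw [hQ, Matrix.vecMul_sub, Matrix.vecMul_one, vecMul_smul_mat, h1, smul_smul,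
      inv_mul_cancel₀ hs0, one_smul, sub_self]
  -- the key pointwise bound
  have key : ∀ t : Fin (d + 1) → ℝ,
      Real.sqrt (((A * Q) *ᵥ t) ⬝ᵥ ((A * Q) *ᵥ t)) ≤
        (Real.sqrt (d + 1) * opN (Pmat d * A * Hmat x)) * Real.sqrt (t ⬝ᵥ t) := by
    intro t
    set q : Fin (d + 1) → ℝ := Q *ᵥ t with hq
    have hAQt : (A * Q) *ᵥ t = A *ᵥ q := by rw [hq, Matrix.mulVec_mulVec]
    -- iota x ⬝ᵥ q = 0
    have hxq : u ⬝ᵥ q = 0 := by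
      rw [hq, Matrix.dotProduct_mulVec, huQ, zero_dotProduct]
    -- q = H (P q)
    set w : Fin d → ℝ := Pmat d *ᵥ q with hw
    have hHw : Hmat x *ᵥ w = q := Hmat_Pmat_mulVec x q hxq
    -- iota y ⬝ᵥ (A *ᵥ q) = 0
    have hyAq : iota y ⬝ᵥ (A *ᵥ q) = 0 := by
      rw [Matrix.dotProduct_mulVec]
      have : iota y ᵥ* A = c • u := by
        rw [hcy, Matrix.smul_vecMul, Matrix.vecMul_vecMul, Matrix.nonsing_inv_mul A hA,
          Matrix.vecMul_one]
      rw [this, smul_dotProduct, hxq, smul_zero]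
    -- z := A *ᵥ q; norm comparison with P z
    set z : Fin (d + 1) → ℝ := A *ᵥ q with hz
    have hPz : Pmat d *ᵥ z = (Pmat d * A * Hmat x) *ᵥ w := by
      rw [hz, ← hHw, Matrix.mulVec_mulVec, Matrix.mulVec_mulVec]
    -- z ⬝ᵥ z ≤ (d+1) * (P z ⬝ᵥ P z)
    have hz0 : z 0 = -∑ i : Fin d, y i * z i.succ := by
      rw [dotProduct, Fin.sum_univ_succ] at hyAq
      simp only [iota, Fin.cases_zero, Fin.cases_succ, one_mul] at hyAq
      linarith [hyAq]
    have hzz : z ⬝ᵥ z ≤ (d + 1) * ((Pmat d *ᵥ z) ⬝ᵥ (Pmat d *ᵥ z)) := by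
      have hPzz : (Pmat d *ᵥ z) ⬝ᵥ (Pmat d *ᵥ z) = ∑ i : Fin d, z i.succ * z i.succ := by
        rw [Pmat_mulVec]; rfl
      have hcs : (∑ i : Fin d, y i * z i.succ) ^ 2 ≤
          (∑ i : Fin d, y i ^ 2) * ∑ i : Fin d, z i.succ ^ 2 :=
        Finset.sum_mul_sq_le_sq_mul_sq _ _ _
      have hysum : (∑ i : Fin d, y i ^ 2) ≤ (d : ℝ) := by
        calc (∑ i : Fin d, y i ^ 2) ≤ ∑ _i : Fin d, (1:ℝ) :=
              Finset.sum_le_sum fun i _ => by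
                have h0 := hy.1 i; have h1 := hy.2.1 i; nlinarith
          _ = (d : ℝ) := by simp
      have hSnn : (0:ℝ) ≤ ∑ i : Fin d, z i.succ ^ 2 :=
        Finset.sum_nonneg fun i _ => sq_nonneg _
      have hz02 : z 0 ^ 2 ≤ (d : ℝ) * ∑ i : Fin d, z i.succ ^ 2 := by
        have h00 : z 0 ^ 2 = (∑ i : Fin d, y i * z i.succ) ^ 2 := by rw [hz0]; ring
        rw [h00]
        exact hcs.trans (mul_le_mul_of_nonneg_right hysum hSnn)
      rw [hPzz, dotProduct, Fin.sum_univ_succ]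
      simp only [← sq]
      linarith [hz02, hSnn]
    -- w ⬝ᵥ w ≤ q ⬝ᵥ q
    have hwq : w ⬝ᵥ w ≤ q ⬝ᵥ q := by
      rw [hw, Pmat_mulVec]
      simp only [dotProduct]
      rw [Fin.sum_univ_succ]
      have := mul_self_nonneg (q 0)
      linarith
    -- q ⬝ᵥ q ≤ t ⬝ᵥ t
    have hqt : q ⬝ᵥ q ≤ t ⬝ᵥ t := by
      have hvv : vecMulVec u u *ᵥ t = (u ⬝ᵥ t) • u := by
        funext i
        simp only [mulVec, dotProduct, vecMulVec_apply, Pi.smul_apply, smul_eq_mul,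
          Finset.sum_mul]
        exact Finset.sum_congr rfl fun k _ => by ring
      have hqe : q = t - (s⁻¹ * (u ⬝ᵥ t)) • u := by
        rw [hq, hQ, Matrix.sub_mulVec, Matrix.one_mulVec, Matrix.smul_mulVec, hvv,
          smul_smul]
      have hqu : q ⬝ᵥ u = 0 := by rw [dotProduct_comm]; exact hxq
      have hqq : q ⬝ᵥ q = q ⬝ᵥ t := by
        nth_rewrite 2 [hqe]
        rw [dotProduct_sub, dotProduct_smul, hqu, smul_zero, sub_zero]
      have hcs : (q ⬝ᵥ t) ^ 2 ≤ (q ⬝ᵥ q) * (t ⬝ᵥ t) := by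
        have := Finset.sum_mul_sq_le_sq_mul_sq Finset.univ q t
        simpa [dotProduct, sq] using this
      rcases eq_or_lt_of_le (dot_self_nonneg q) with h | h
      · rw [← h]; exact dot_self_nonneg t
      · rw [hqq] at h ⊢
        nlinarith [hcs, hqq]
    -- assemble
    rw [hAQt]
    calc Real.sqrt (z ⬝ᵥ z)
        ≤ Real.sqrt ((d + 1) * ((Pmat d *ᵥ z) ⬝ᵥ (Pmat d *ᵥ z))) := Real.sqrt_le_sqrt hzz
      _ = Real.sqrt (d + 1) * Real.sqrt ((Pmat d *ᵥ z) ⬝ᵥ (Pmat d *ᵥ z)) :=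
          Real.sqrt_mul (by positivity) _
      _ ≤ Real.sqrt (d + 1) * (opN (Pmat d * A * Hmat x) * Real.sqrt (w ⬝ᵥ w)) := by
          rw [hPz]
          exact mul_le_mul_of_nonneg_left (dot_mulVec_le_opN _ _) (Real.sqrt_nonneg _)
      _ ≤ Real.sqrt (d + 1) * (opN (Pmat d * A * Hmat x) * Real.sqrt (t ⬝ᵥ t)) := by
          gcongr
          · exact opN_nonneg _
          · exact hwq.trans hqt
      _ = (Real.sqrt (d + 1) * opN (Pmat d * A * Hmat x)) * Real.sqrt (t ⬝ᵥ t) := by ring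
  have hopAQ : opN (A * Q) ≤ Real.sqrt (d + 1) * opN (Pmat d * A * Hmat x) :=
    opN_le_of_forall _ _ (mul_nonneg (Real.sqrt_nonneg _) (opN_nonneg _)) key
  -- conclude via the inf
  have hmem : opN (A - B) ∈
      {r : ℝ | ∃ B' : Matrix (Fin (d+1)) (Fin (d+1)) ℝ, B'.rank ≤ 1 ∧ r = opN (A - B')} :=
    ⟨B, hBrank, rfl⟩
  have hbdd : BddBelow
      {r : ℝ | ∃ B' : Matrix (Fin (d+1)) (Fin (d+1)) ℝ, B'.rank ≤ 1 ∧ r = opN (A - B')} :=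
    ⟨0, fun r ⟨B', _, hr⟩ => hr ▸ opN_nonneg _⟩
  calc delta2 A ≤ opN (A - B) := csInf_le hbdd hmem
    _ = opN (A * Q) := by rw [hAB]
    _ ≤ Real.sqrt (d + 1) * opN (Pmat d * A * Hmat x) := hopAQ
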